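/- Let f ∈ Γ₀(H), μ > 0, and (x,η) ∈ H × ℝ. If η + μ f*(P_{cl(dom f*)}(x/μ)) ≤ 0, then prox_{μ f̃}(x,η) = (prox_{μ·(rec f)} x, 0) and f̃(prox_{μ f̃}(x,η)) = (rec f)(prox_{μ·(rec f)} x). -/

import Mathlib

open scoped Classical
open Filter Set Topology

noncomputable section

/-- `f` is proper, convex and lower semicontinuous (the class `Γ₀`). -/
def Gamma0 {E : Type*} [NormedAddCommGroup E] [NormedSpace ℝ E] (f : E → EReal) : Prop :=
  (∃ x, f x ≠ ⊤) ∧ (∀ x, f x ≠ ⊥) ∧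
  (∀ x y : E, ∀ a b : ℝ, 0 ≤ a → 0 ≤ b → a + b = 1 →
    f (a • x + b • y) ≤ (a : EReal) * f x + (b : EReal) * f y) ∧
  LowerSemicontinuous f

/-- recession function of `f` with base point `x0 ∈ dom f`:
`(rec f)(x) = lim_{t→∞} (f(x0+tx)-f(x0))/t`, which by convexity equals the supremum. -/
def recFn {E : Type*} [NormedAddCommGroup E] [NormedSpace ℝ E]
    (f : E → EReal) (x0 : E) (x : E) : EReal :=
  ⨆ t ∈ Set.Ioi (0 : ℝ), (f (x0 + t • x) - f x0) * ((t⁻¹ : ℝ) : EReal)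

/-- the perspective function of `f` (recession with base point `x0 ∈ dom f`). -/
def persp {E : Type*} [NormedAddCommGroup E] [NormedSpace ℝ E]
    (f : E → EReal) (x0 : E) (p : E × ℝ) : EReal :=
  if 0 < p.2 then (p.2 : EReal) * f (p.2⁻¹ • p.1)
  else if p.2 = 0 then recFn f x0 p.1 else ⊤

/-- Fenchel conjugate. -/
def conj {E : Type*} [NormedAddCommGroup E] [InnerProductSpace ℝ E]
    (f : E → EReal) (u : E) : EReal :=
  ⨆ x, ((inner ℝ x u : ℝ) : EReal) - f x

/-- Fenchel conjugate on `ℝ`. -/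
def conjR (f : ℝ → EReal) (u : ℝ) : EReal := ⨆ x : ℝ, ((x * u : ℝ) : EReal) - f x

/-- Fenchel conjugate on `E × ℝ` (with the Hilbert direct sum inner ℝ product). -/
def conj2 {E : Type*} [NormedAddCommGroup E] [InnerProductSpace ℝ E]
    (g : E × ℝ → EReal) (q : E × ℝ) : EReal :=
  ⨆ p : E × ℝ, (((inner ℝ p.1 q.1 : ℝ) + p.2 * q.2 : ℝ) : EReal) - g p

/-- indicator function of a set. -/
def indE {E : Type*} (C : Set E) (x : E) : EReal := if x ∈ C then 0 else ⊤

/-- support function of a set. -/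
def suppFn {E : Type*} [NormedAddCommGroup E] [InnerProductSpace ℝ E]
    (C : Set E) (x : E) : EReal := ⨆ u ∈ C, ((inner ℝ u x : ℝ) : EReal)

/-- epigraph of an extended-real-valued function. -/
def epi {E : Type*} (f : E → EReal) : Set (E × ℝ) := {p | f p.1 ≤ (p.2 : EReal)}

/-- epigraph of the perspective of `f`, as a subset of `E × ℝ × ℝ`. -/
def epiPersp {E : Type*} [NormedAddCommGroup E] [NormedSpace ℝ E]
    (f : E → EReal) (x0 : E) : Set (E × ℝ × ℝ) :=
  {p | persp f x0 (p.1, p.2.1) ≤ (p.2.2 : EReal)}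

/-- `p` is the metric projection of `z` onto `C ⊆ E`. -/
def IsProjE {E : Type*} [NormedAddCommGroup E] (C : Set E) (z p : E) : Prop :=
  p ∈ C ∧ ∀ q ∈ C, ‖z - p‖ ≤ ‖z - q‖

/-- `p` is the metric projection of `z` onto `C ⊆ E ⊕ ℝ` (Hilbert direct sum distance). -/
def IsProj2 {E : Type*} [NormedAddCommGroup E] (C : Set (E × ℝ)) (z p : E × ℝ) : Prop :=
  p ∈ C ∧ ∀ q ∈ C,
    ‖z.1 - p.1‖ ^ 2 + (z.2 - p.2) ^ 2 ≤ ‖z.1 - q.1‖ ^ 2 + (z.2 - q.2) ^ 2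

/-- `p` is the metric projection of `z` onto `C ⊆ E ⊕ ℝ ⊕ ℝ` (Hilbert direct sum distance). -/
def IsProj3 {E : Type*} [NormedAddCommGroup E] (C : Set (E × ℝ × ℝ)) (z p : E × ℝ × ℝ) : Prop :=
  p ∈ C ∧ ∀ q ∈ C,
    ‖z.1 - p.1‖ ^ 2 + (z.2.1 - p.2.1) ^ 2 + (z.2.2 - p.2.2) ^ 2 ≤
      ‖z.1 - q.1‖ ^ 2 + (z.2.1 - q.2.1) ^ 2 + (z.2.2 - q.2.2) ^ 2

/-- `p = prox_{γ g}(z)` on `E`. -/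
def IsProxE {E : Type*} [NormedAddCommGroup E] (g : E → EReal) (γ : ℝ) (z p : E) : Prop :=
  ∀ y, g p + ((‖z - p‖ ^ 2 / (2 * γ) : ℝ) : EReal) ≤ g y + ((‖z - y‖ ^ 2 / (2 * γ) : ℝ) : EReal)

/-- `p = prox_{γ g}(z)` on `E ⊕ ℝ` (Hilbert direct sum distance). -/
def IsProx2 {E : Type*} [NormedAddCommGroup E] (g : E × ℝ → EReal) (γ : ℝ)
    (z p : E × ℝ) : Prop :=
  ∀ y, g p + (((‖z.1 - p.1‖ ^ 2 + (z.2 - p.2) ^ 2) / (2 * γ) : ℝ) : EReal) ≤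
    g y + (((‖z.1 - y.1‖ ^ 2 + (z.2 - y.2) ^ 2) / (2 * γ) : ℝ) : EReal)

/-- subdifferential of `f` at `x`. -/
def subdiff {E : Type*} [NormedAddCommGroup E] [InnerProductSpace ℝ E]
    (f : E → EReal) (x : E) : Set E :=
  {u | ∀ y, ((inner ℝ (y - x) u : ℝ) : EReal) + f x ≤ f y}

section Aux

variable {H : Type*} [NormedAddCommGroup H] [InnerProductSpace ℝ H]

lemma conj_lb (f : H → EReal) {x0 : H} {T0 : ℝ} (h : f x0 = (T0 : EReal)) (u : H) :
    (((inner ℝ x0 u : ℝ) - T0 : ℝ) : EReal) ≤ conj f u := by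
  calc (((inner ℝ x0 u : ℝ) - T0 : ℝ) : EReal) = ((inner ℝ x0 u : ℝ) : EReal) - (T0 : EReal) :=
        EReal.coe_sub _ _
    _ = ((inner ℝ x0 u : ℝ) : EReal) - f x0 := by rw [h]
    _ ≤ conj f u := le_iSup (fun x => ((inner ℝ x u : ℝ) : EReal) - f x) x0

lemma conj_le_of_minorant (f : H → EReal) (hbot : ∀ y, f y ≠ ⊥) {u : H} {β : ℝ}
    (hm : ∀ y, (((inner ℝ y u : ℝ) - β : ℝ) : EReal) ≤ f y) : conj f u ≤ (β : EReal) := by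
  rw [conj]; apply iSup_le; intro y
  rcases eq_or_ne (f y) ⊤ with h | h
  · rw [h, sub_eq_add_neg]; simp
  · have hF := EReal.coe_toReal h (hbot y)
    rw [← hF, ← EReal.coe_sub, EReal.coe_le_coe_iff]
    have := hm y; rw [← hF, EReal.coe_le_coe_iff] at this; linarith

lemma epi_isClosed (f : H → EReal) (hl : LowerSemicontinuous f) : IsClosed (epi f) := by
  rw [← isOpen_compl_iff, isOpen_iff_mem_nhds]
  intro p hp
  have hlt : ((p.2 : ℝ) : EReal) < f p.1 := by
    by_contra h; exact hp (not_lt.1 h)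
  obtain ⟨c, hc1, hc2⟩ := EReal.lt_iff_exists_real_btwn.1 hlt
  have h1 : ∀ᶠ q : H × ℝ in 𝓝 p, (c : EReal) < f q.1 :=
    (continuous_fst.tendsto p).eventually (hl p.1 c hc2)
  have hpc : p.2 < c := EReal.coe_lt_coe_iff.1 hc1
  have h2 : ∀ᶠ q : H × ℝ in 𝓝 p, q.2 < c :=
    (continuous_snd.tendsto p).eventually (eventually_lt_nhds hpc)
  filter_upwards [h1, h2] with q hq1 hq2
  intro hq
  exact absurd (lt_of_le_of_lt hq (by exact_mod_cast hq2)) (not_lt.2 hq1.le)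

lemma emul_le {a ρ : ℝ} (ha : 0 ≤ a) {u : EReal} (h : u ≤ (ρ : EReal)) :
    (a : EReal) * u ≤ ((a * ρ : ℝ) : EReal) := by
  rcases ha.eq_or_lt with rfl | ha'
  · simp
  · induction u using EReal.rec with
    | bot => rw [EReal.coe_mul_bot_of_pos ha']; exact bot_le
    | coe b =>
        rw [← EReal.coe_mul, EReal.coe_le_coe_iff]
        exact mul_le_mul_of_nonneg_left (EReal.coe_le_coe_iff.1 h) ha
    | top => exact absurd h (by simp)

lemma epi_convex (f : H → EReal) (hbot : ∀ x, f x ≠ ⊥)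
    (hc : ∀ x y : H, ∀ a b : ℝ, 0 ≤ a → 0 ≤ b → a + b = 1 →
      f (a • x + b • y) ≤ (a : EReal) * f x + (b : EReal) * f y) :
    Convex ℝ (epi f) := by
  intro p hp q hq a b ha hb hab
  have h1 : f (a • p.1 + b • q.1) ≤ (a : EReal) * f p.1 + (b : EReal) * f q.1 :=
    hc p.1 q.1 a b ha hb hab
  have h2 : (a : EReal) * f p.1 ≤ ((a * p.2 : ℝ) : EReal) := emul_le ha hp
  have h3 : (b : EReal) * f q.1 ≤ ((b * q.2 : ℝ) : EReal) := emul_le hb hq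
  have : f (a • p.1 + b • q.1) ≤ ((a * p.2 + b * q.2 : ℝ) : EReal) := by
    rw [EReal.coe_add]; exact h1.trans (add_le_add h2 h3)
  exact this

variable [CompleteSpace H]

lemma sep_point (f : H → EReal) (hf : Gamma0 f) {x0 : H} (hx0 : f x0 ≠ ⊤)
    {v : H} {α : ℝ} (hv : ¬ f v ≤ (α : EReal)) :
    ∃ (m : H) (s u : ℝ), 0 ≤ s ∧ (inner ℝ v m : ℝ) + α * s < u ∧
      ∀ y : H, ∀ ρ : ℝ, f y ≤ (ρ : EReal) → u < (inner ℝ y m : ℝ) + ρ * s := by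
  obtain ⟨hne, hbot, hc, hl⟩ := hf
  have hcl : IsClosed (epi f) := epi_isClosed f hl
  have hcv : Convex ℝ (epi f) := epi_convex f hbot hc
  have hp : ((v, α) : H × ℝ) ∉ epi f := hv
  obtain ⟨φ, u, hvu, hepi⟩ := geometric_hahn_banach_point_closed hcv hcl hp
  set ψ : H →L[ℝ] ℝ := φ.comp (ContinuousLinearMap.inl ℝ H ℝ) with hψ
  set s : ℝ := φ (0, 1) with hs
  set m : H := (InnerProductSpace.toDual ℝ H).symm ψ with hm
  have hinner : ∀ y : H, (inner ℝ y m : ℝ) = ψ y := by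
    intro y; rw [real_inner_comm]; exact InnerProductSpace.toDual_symm_apply
  have hφ : ∀ (y : H) (ρ : ℝ), φ (y, ρ) = (inner ℝ y m : ℝ) + ρ * s := by
    intro y ρ
    have hd : ((y, ρ) : H × ℝ) = (y, (0:ℝ)) + ρ • ((0:H), (1:ℝ)) := by
      simp [Prod.ext_iff]
    rw [hd, map_add, map_smul, smul_eq_mul, hinner]
    rfl
  have T0 : ℝ := 0
  have hfx0 : f x0 = ((f x0).toReal : EReal) := (EReal.coe_toReal hx0 (hbot x0)).symm
  have hs0 : 0 ≤ s := by
    by_contra hneg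
    push_neg at hneg
    set n : ℝ := max (f x0).toReal ((u - (inner ℝ x0 m : ℝ)) / s) with hn
    have hmem : f x0 ≤ (n : EReal) := by
      rw [hfx0]; exact_mod_cast le_max_left _ _
    have := hepi (x0, n) hmem
    rw [hφ] at this
    have hns : n * s ≤ u - (inner ℝ x0 m : ℝ) := by
      have h1 : (u - (inner ℝ x0 m : ℝ)) / s ≤ n := le_max_right _ _
      have := mul_le_mul_of_nonpos_right h1 hneg.le
      rwa [div_mul_cancel₀ _ (ne_of_lt hneg)] at this
    linarith
  refine ⟨m, s, u, hs0, ?_, ?_⟩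
  · have := hvu; rw [hφ] at this; exact this
  · intro y ρ hyρ
    have := hepi (y, ρ) hyρ
    rw [hφ] at this; exact this

lemma minorant_of_sep (f : H → EReal) (hbot : ∀ y, f y ≠ ⊥) {m : H} {s u : ℝ} (hs : 0 < s)
    (hepi : ∀ y : H, ∀ ρ : ℝ, f y ≤ (ρ : EReal) → u < (inner ℝ y m : ℝ) + ρ * s) :
    ∀ y, (((inner ℝ y ((-(s⁻¹)) • m) : ℝ) - (-(u / s)) : ℝ) : EReal) ≤ f y := by
  intro y
  rcases eq_or_ne (f y) ⊤ with h | h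
  · rw [h]; exact le_top
  · have hF := EReal.coe_toReal h (hbot y)
    have hy := hepi y (f y).toReal (le_of_eq hF.symm)
    rw [← hF, EReal.coe_le_coe_iff, real_inner_smul_right]
    have hs' : s ≠ 0 := ne_of_gt hs
    rw [div_eq_mul_inv]
    have h1 : u * s⁻¹ < ((inner ℝ y m : ℝ) + (f y).toReal * s) * s⁻¹ :=
      mul_lt_mul_of_pos_right hy (inv_pos.2 hs)
    have h3 : ((inner ℝ y m : ℝ) + (f y).toReal * s) * s⁻¹
        = (inner ℝ y m : ℝ) * s⁻¹ + (f y).toReal := by field_simp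
    rw [h3] at h1; linarith

lemma exists_minorant (f : H → EReal) (hf : Gamma0 f) {x0 : H} (hx0 : f x0 ≠ ⊤) :
    ∃ (u₀ : H) (β₀ : ℝ), ∀ y, (((inner ℝ y u₀ : ℝ) - β₀ : ℝ) : EReal) ≤ f y := by
  have hbot := hf.2.1
  have hfx0 : ((f x0).toReal : EReal) = f x0 := EReal.coe_toReal hx0 (hbot x0)
  set T0 := (f x0).toReal with hT0
  have hv : ¬ f x0 ≤ ((T0 - 1 : ℝ) : EReal) := by
    rw [← hfx0]; intro h
    have := EReal.coe_le_coe_iff.1 h; linarith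
  obtain ⟨m, s, u, hs0, hpt, hepi⟩ := sep_point f hf hx0 hv
  rcases hs0.eq_or_lt with hs | hs
  · exfalso
    have h1 := hepi x0 T0 (le_of_eq hfx0.symm)
    rw [← hs] at h1 hpt
    simp at h1 hpt; linarith
  · exact ⟨(-(s⁻¹)) • m, -(u / s), minorant_of_sep f hbot hs hepi⟩

lemma recFn_le (f : H → EReal) (hf : Gamma0 f) {x0 : H} (hx0 : f x0 ≠ ⊤) (d : H) (c : ℝ)
    (hC : ∀ u : H, conj f u ≠ ⊤ → (inner ℝ u d : ℝ) ≤ c) :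
    recFn f x0 d ≤ (c : EReal) := by
  have hbot := hf.2.1
  have hfx0 : ((f x0).toReal : EReal) = f x0 := EReal.coe_toReal hx0 (hbot x0)
  set T0 := (f x0).toReal with hT0
  rw [recFn]
  apply iSup₂_le
  intro t ht
  rw [Set.mem_Ioi] at ht
  have hft : f (x0 + t • d) ≤ ((T0 + t * c : ℝ) : EReal) := by
    by_contra hv
    obtain ⟨m, s, u, hs0, hpt, hepi⟩ := sep_point f hf hx0 hv
    have hvin : (inner ℝ (x0 + t • d) m : ℝ) = (inner ℝ x0 m : ℝ) + t * (inner ℝ d m : ℝ) := by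
      rw [inner_add_left, real_inner_smul_left]
    rcases hs0.eq_or_lt with hs | hs
    · -- vertical separation
      obtain ⟨u₀, β₀, hmin⟩ := exists_minorant f hf hx0
      have hx0m := hepi x0 T0 (le_of_eq hfx0.symm)
      rw [← hs] at hx0m hpt
      simp only [mul_zero, add_zero] at hx0m hpt
      have hdm : (inner ℝ d m : ℝ) < 0 := by
        rw [hvin] at hpt; nlinarith
      -- for every λ ≥ 0, u₀ - λ m is in dom conj
      have hdomlam : ∀ lam : ℝ, 0 ≤ lam → (inner ℝ u₀ d : ℝ) - lam * (inner ℝ m d : ℝ) ≤ c := by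
        intro lam hlam
        have hmino : ∀ y, (((inner ℝ y (u₀ - lam • m) : ℝ) - (β₀ - lam * u) : ℝ) : EReal) ≤ f y := by
          intro y
          rcases eq_or_ne (f y) ⊤ with h | h
          · rw [h]; exact le_top
          · have hFy : ((f y).toReal : EReal) = f y := EReal.coe_toReal h (hbot y)
            have h1 : (inner ℝ y u₀ : ℝ) - β₀ ≤ (f y).toReal := by
              have := hmin y; rw [← hFy, EReal.coe_le_coe_iff] at this; exact this
            have h2 : u < (inner ℝ y m : ℝ) := by
              have := hepi y (f y).toReal (le_of_eq hFy.symm)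
              rw [← hs] at this; simpa using this
            rw [← hFy, EReal.coe_le_coe_iff, inner_sub_right, real_inner_smul_right]
            nlinarith [mul_nonneg hlam (le_of_lt (sub_pos.2 h2))]
        have := hC (u₀ - lam • m) (by
          intro htop
          have := conj_le_of_minorant f hbot hmino
          rw [htop] at this
          exact EReal.coe_ne_top _ (top_le_iff.1 this))
        rwa [inner_sub_left, real_inner_smul_left] at this
      have hmd : (inner ℝ m d : ℝ) < 0 := by rwa [real_inner_comm]
      rcases le_or_gt (inner ℝ u₀ d : ℝ) c with h | h
      · have hlam : (0:ℝ) ≤ ((inner ℝ u₀ d : ℝ) - (c + 1)) / (inner ℝ m d : ℝ) :=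
          div_nonneg_iff.2 (Or.inr ⟨by linarith, hmd.le⟩)
        have h2 := hdomlam _ hlam
        rw [div_mul_cancel₀ _ (ne_of_lt hmd)] at h2
        linarith
      · have h2 := hdomlam 0 le_rfl
        simp at h2; linarith
    · -- non-vertical separation: affine minorant through u'
      set u' := (-(s⁻¹)) • m with hu'
      set β' := -(u / s) with hβ'
      have hmin := minorant_of_sep f hbot hs hepi
      have hdom : conj f u' ≠ ⊤ := by
        intro htop
        have := conj_le_of_minorant f hbot hmin
        rw [htop] at this
        exact EReal.coe_ne_top _ (top_le_iff.1 this)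
      have hCd := hC u' hdom
      have hx0u : (inner ℝ x0 u' : ℝ) - β' ≤ T0 := by
        have := hmin x0; rw [← hfx0, EReal.coe_le_coe_iff] at this; exact this
      have hvu' : (inner ℝ (x0 + t • d) u' : ℝ)
          = (inner ℝ x0 u' : ℝ) + t * (inner ℝ d u' : ℝ) := by
        rw [inner_add_left, real_inner_smul_left]
      -- from hpt : ⟪v,m⟫ + α s < u, derive α < ⟪v,u'⟫ - β'
      have hptu' : T0 + t * c < (inner ℝ (x0 + t • d) u' : ℝ) - β' := by
        have hinn : (inner ℝ (x0 + t • d) u' : ℝ)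
            = -(s⁻¹) * (inner ℝ (x0 + t • d) m : ℝ) := by
          rw [hu', real_inner_smul_right]
        have hs' : s ≠ 0 := ne_of_gt hs
        rw [hinn, hβ', div_eq_mul_inv]
        have h1 := mul_lt_mul_of_pos_right hpt (inv_pos.2 hs)
        have h3 : ((inner ℝ (x0 + t • d) m : ℝ) + (T0 + t * c) * s) * s⁻¹
            = (inner ℝ (x0 + t • d) m : ℝ) * s⁻¹ + (T0 + t * c) := by field_simp
        rw [h3] at h1; linarith
      have hdu' : (inner ℝ d u' : ℝ) ≤ c := by rwa [real_inner_comm]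
      rw [hvu'] at hptu'
      nlinarith [mul_le_mul_of_nonneg_left hdu' ht.le]
  -- now convert to the difference quotient bound
  have hne : f (x0 + t • d) ≠ ⊤ := ne_top_of_le_ne_top (EReal.coe_ne_top _) hft
  have hF : ((f (x0 + t • d)).toReal : EReal) = f (x0 + t • d) :=
    EReal.coe_toReal hne (hbot _)
  rw [← hF, ← hfx0, ← EReal.coe_sub, ← EReal.coe_mul, EReal.coe_le_coe_iff]
  have hFle : (f (x0 + t • d)).toReal ≤ T0 + t * c := by
    rw [← hF, EReal.coe_le_coe_iff] at hft; exact hft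
  have h1 : ((f (x0 + t • d)).toReal - T0) * t⁻¹ ≤ (t * c) * t⁻¹ :=
    mul_le_mul_of_nonneg_right (by linarith) (inv_nonneg.2 ht.le)
  rwa [mul_comm t c, mul_assoc, mul_inv_cancel₀ (ne_of_gt ht), mul_one] at h1

lemma recFn_ne_bot (f : H → EReal) (hf : Gamma0 f) {x0 : H} (hx0 : f x0 ≠ ⊤) (d : H) :
    recFn f x0 d ≠ ⊥ := by
  have hbot := hf.2.1
  have hfx0 : ((f x0).toReal : EReal) = f x0 := EReal.coe_toReal hx0 (hbot x0)
  have hterm : (f (x0 + (1:ℝ) • d) - f x0) * (((1:ℝ)⁻¹ : ℝ) : EReal) ≤ recFn f x0 d := by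
    rw [recFn]
    exact le_iSup₂ (f := fun t (_ : t ∈ Set.Ioi (0:ℝ)) => (f (x0 + t • d) - f x0) * ((t⁻¹ : ℝ) : EReal)) 1 (Set.mem_Ioi.2 one_pos)
  intro hb
  rw [hb, le_bot_iff] at hterm
  have h1 : (((1:ℝ)⁻¹ : ℝ) : EReal) = 1 := by norm_num
  rw [h1, mul_one] at hterm
  rcases eq_or_ne (f (x0 + (1:ℝ) • d)) ⊤ with h | h
  · rw [h, ← hfx0, EReal.top_sub_coe] at hterm; simp at hterm
  · have hFy : ((f (x0 + (1:ℝ) • d)).toReal : EReal) = f (x0 + (1:ℝ) • d) :=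
      EReal.coe_toReal h (hbot _)
    rw [← hFy, ← hfx0, ← EReal.coe_sub] at hterm
    exact EReal.coe_ne_bot _ hterm

lemma dom_conj_convex (f : H → EReal) (hf : Gamma0 f) {x0 : H} (hx0 : f x0 ≠ ⊤) :
    Convex ℝ {u : H | conj f u ≠ ⊤} := by
  have hbot := hf.2.1
  have hfx0 : ((f x0).toReal : EReal) = f x0 := EReal.coe_toReal hx0 (hbot x0)
  set T0 := (f x0).toReal with hT0
  intro u hu u' hu' a b ha hb hab
  have hlbu := conj_lb f hfx0.symm u
  have hlbu' := conj_lb f hfx0.symm u'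
  have hcu : ((conj f u).toReal : EReal) = conj f u :=
    EReal.coe_toReal hu (fun hb' => by
      rw [hb'] at hlbu; exact EReal.coe_ne_bot _ (le_bot_iff.1 hlbu))
  have hcu' : ((conj f u').toReal : EReal) = conj f u' :=
    EReal.coe_toReal hu' (fun hb' => by
      rw [hb'] at hlbu'; exact EReal.coe_ne_bot _ (le_bot_iff.1 hlbu'))
  set cu := (conj f u).toReal
  set cu' := (conj f u').toReal
  have hle : conj f (a • u + b • u') ≤ ((a * cu + b * cu' : ℝ) : EReal) := by
    rw [conj]; apply iSup_le; intro y
    rcases eq_or_ne (f y) ⊤ with h | h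
    · rw [h, sub_eq_add_neg]; simp
    · have hFy : ((f y).toReal : EReal) = f y := EReal.coe_toReal h (hbot y)
      set F := (f y).toReal
      have h1 : (inner ℝ y u : ℝ) - F ≤ cu := by
        have h2 : ((inner ℝ y u : ℝ) : EReal) - f y ≤ conj f u := by
          rw [conj]; exact le_iSup (fun x : H => ((inner ℝ x u : ℝ) : EReal) - f x) y
        rw [← hFy, ← hcu, ← EReal.coe_sub, EReal.coe_le_coe_iff] at h2; exact h2
      have h1' : (inner ℝ y u' : ℝ) - F ≤ cu' := by
        have h2 : ((inner ℝ y u' : ℝ) : EReal) - f y ≤ conj f u' := by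
          rw [conj]; exact le_iSup (fun x : H => ((inner ℝ x u' : ℝ) : EReal) - f x) y
        rw [← hFy, ← hcu', ← EReal.coe_sub, EReal.coe_le_coe_iff] at h2; exact h2
      rw [← hFy, ← EReal.coe_sub, EReal.coe_le_coe_iff, inner_add_right,
        real_inner_smul_right, real_inner_smul_right]
      have habF : a * F + b * F = F := by rw [← add_mul, hab, one_mul]
      linarith [mul_le_mul_of_nonneg_left h1 ha, mul_le_mul_of_nonneg_left h1' hb, habF]
  exact ne_top_of_le_ne_top (EReal.coe_ne_top _) hle

lemma proj_var {C : Set H} (hC : Convex ℝ C) {z w : H}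
    (hw : w ∈ C ∧ ∀ q ∈ C, ‖z - w‖ ≤ ‖z - q‖) :
    ∀ u ∈ C, (inner ℝ (u - w) (z - w) : ℝ) ≤ 0 := by
  obtain ⟨hwC, hmin⟩ := hw
  intro u hu
  by_contra hcon
  push_neg at hcon
  have hun : u - w ≠ 0 := by
    intro h; rw [h] at hcon; simp at hcon
  have hnorm : (0:ℝ) < ‖u - w‖ ^ 2 := by
    have := norm_pos_iff.2 hun; positivity
  set γ := (inner ℝ (u - w) (z - w) : ℝ) with hγ
  set θ := min 1 (γ / ‖u - w‖ ^ 2) with hθ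
  have hθpos : 0 < θ := lt_min one_pos (div_pos hcon hnorm)
  have hq : w + θ • (u - w) ∈ C := by
    have h0 := hC hwC hu (by linarith [min_le_left (1:ℝ) (γ / ‖u - w‖ ^ 2)] :
      (0:ℝ) ≤ 1 - θ) hθpos.le (by ring)
    have heq : (1 - θ) • w + θ • u = w + θ • (u - w) := by
      rw [smul_sub, sub_smul, one_smul]; abel
    rwa [heq] at h0
  have h2 := hmin _ hq
  have h3 : ‖z - (w + θ • (u - w))‖ ^ 2
      = ‖z - w‖ ^ 2 - 2 * (θ * γ) + θ ^ 2 * ‖u - w‖ ^ 2 := by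
    have heq : z - (w + θ • (u - w)) = (z - w) - θ • (u - w) := by abel
    rw [heq, @norm_sub_sq_real H, real_inner_smul_right, norm_smul, mul_pow, real_inner_comm]
    simp [sq_abs, hγ]
  have h4 : ‖z - w‖ ^ 2 ≤ ‖z - (w + θ • (u - w))‖ ^ 2 :=
    pow_le_pow_left₀ (norm_nonneg _) h2 2
  have h5 : 2 * γ ≤ θ * ‖u - w‖ ^ 2 := by nlinarith [h3, h4, hθpos]
  have h6 : θ * ‖u - w‖ ^ 2 ≤ γ := by
    have hm2 : θ ≤ γ / ‖u - w‖ ^ 2 := min_le_right _ _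
    calc θ * ‖u - w‖ ^ 2 ≤ (γ / ‖u - w‖ ^ 2) * ‖u - w‖ ^ 2 :=
          mul_le_mul_of_nonneg_right hm2 hnorm.le
      _ = γ := div_mul_cancel₀ _ (ne_of_gt hnorm)
  linarith

lemma finalIneq (μ K xr ww wx η y2 F xy1 yw s xw : ℝ) (hμ : 0 < μ)
    (h1 : μ * K + xr / 2 ≤ μ * (wx - μ * ww) + μ ^ 2 * ww / 2)
    (hB2 : 2 * μ * (yw - y2 * s) ≤ 2 * μ * (y2 * F))
    (hCc : y2 * η + y2 * (μ * s) ≤ 0)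
    (hD2 : 0 ≤ xy1 - 2 * (μ * (xw - yw)) + μ ^ 2 * ww)
    (hcomm : wx = xw) :
    2 * μ * K + (xr + (η - 0) ^ 2) ≤ 2 * μ * (y2 * F) + (xy1 + (η - y2) ^ 2) := by
  nlinarith [h1, hB2, hCc, hD2, sq_nonneg y2, mul_pos hμ hμ]

lemma divHelper' {m a b c d : ℝ} (hm : 0 < m) (h : 2 * m * a + b ≤ 2 * m * c + d) :
    a + b / (2 * m) ≤ c + d / (2 * m) := by
  have h2 : (0:ℝ) < 2 * m := by linarith
  have h3 : a - c ≤ (d - b) / (2 * m) := (le_div_iff₀ h2).2 (by nlinarith)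
  have h4 : (d - b) / (2 * m) = d / (2 * m) - b / (2 * m) := sub_div _ _ _
  linarith [h3, h4.symm.le]

end Aux

set_option maxHeartbeats 1000000 in
theorem stmt8 {H : Type*} [NormedAddCommGroup H] [InnerProductSpace ℝ H] [CompleteSpace H]
    (f : H → EReal) (hf : Gamma0 f) (x0 : H) (hx0 : f x0 ≠ ⊤)
    (μ : ℝ) (hμ : 0 < μ) (x : H) (η : ℝ) (w : H)
    (hw : IsProjE (closure {u : H | conj f u ≠ ⊤}) (μ⁻¹ • x) w)
    (hcond : (η : EReal) + (μ : EReal) * conj f w ≤ 0)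
    (r : H) (hr : IsProxE (fun y => (μ : EReal) * recFn f x0 y) 1 x r) :
    IsProx2 (persp f x0) μ (x, η) (r, 0) ∧
      persp f x0 (r, 0) = recFn f x0 r := by
  have hbot := hf.2.1
  have hfx0 : ((f x0).toReal : EReal) = f x0 := EReal.coe_toReal hx0 (hbot x0)
  have hCconv : Convex ℝ (closure {u : H | conj f u ≠ ⊤}) :=
    (dom_conj_convex f hf hx0).closure
  have hvar : ∀ u : H, conj f u ≠ ⊤ → (inner ℝ (u - w) (μ⁻¹ • x - w) : ℝ) ≤ 0 :=
    fun u hu => proj_var hCconv hw u (subset_closure hu)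
  set d := x - μ • w with hd
  have hzw : μ • (μ⁻¹ • x - w) = d := by
    rw [smul_sub, smul_smul, mul_inv_cancel₀ (ne_of_gt hμ), one_smul]
  set ρ := (inner ℝ w d : ℝ) with hρ
  have hCle : ∀ u : H, conj f u ≠ ⊤ → (inner ℝ u d : ℝ) ≤ ρ := by
    intro u hu
    have h1 := hvar u hu
    have h2 : (inner ℝ (u - w) d : ℝ) ≤ 0 := by
      rw [← hzw, real_inner_smul_right]
      nlinarith [h1, hμ.le]
    rw [inner_sub_left] at h2; linarith
  have hrecd : recFn f x0 d ≤ (ρ : EReal) := recFn_le f hf hx0 d ρ hCle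
  -- conj f w is finite
  have hwtop : conj f w ≠ ⊤ := by
    intro h
    rw [h, EReal.coe_mul_top_of_pos hμ, EReal.coe_add_top] at hcond
    simp at hcond
  have hlbw := conj_lb f hfx0.symm w
  have hwbot : conj f w ≠ ⊥ := fun h => by
    rw [h] at hlbw; exact EReal.coe_ne_bot _ (le_bot_iff.1 hlbw)
  have hsw : ((conj f w).toReal : EReal) = conj f w := EReal.coe_toReal hwtop hwbot
  set s := (conj f w).toReal with hs
  have hcondR : η + μ * s ≤ 0 := by
    rw [← hsw, ← EReal.coe_mul, ← EReal.coe_add] at hcond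
    exact_mod_cast hcond
  -- recFn f x0 d is finite
  have hdbot := recFn_ne_bot f hf hx0 d
  have hDr : ((recFn f x0 d).toReal : EReal) = recFn f x0 d :=
    EReal.coe_toReal (ne_top_of_le_ne_top (EReal.coe_ne_top _) hrecd) hdbot
  set D := (recFn f x0 d).toReal with hD
  have hDle : D ≤ ρ := by rw [← hDr, EReal.coe_le_coe_iff] at hrecd; exact hrecd
  -- prox inequality at d, extract that recFn f x0 r is finite
  have hrd := hr d
  simp only at hrd
  have hrtop : recFn f x0 r ≠ ⊤ := by
    intro h
    rw [h, EReal.coe_mul_top_of_pos hμ, EReal.top_add_coe, ← hDr, ← EReal.coe_mul,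
      ← EReal.coe_add] at hrd
    exact EReal.coe_ne_top _ (top_le_iff.1 hrd)
  have hrbot := recFn_ne_bot f hf hx0 r
  have hKr : ((recFn f x0 r).toReal : EReal) = recFn f x0 r := EReal.coe_toReal hrtop hrbot
  set K := (recFn f x0 r).toReal with hK
  have hrdR : μ * K + ‖x - r‖ ^ 2 / (2 * 1) ≤ μ * D + ‖x - d‖ ^ 2 / (2 * 1) := by
    rw [← hKr, ← hDr, ← EReal.coe_mul, ← EReal.coe_mul, ← EReal.coe_add, ← EReal.coe_add,
      EReal.coe_le_coe_iff] at hrd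
    exact hrd
  have hxd : ‖x - d‖ ^ 2 = μ ^ 2 * ‖w‖ ^ 2 := by
    have : x - d = μ • w := by rw [hd]; abel
    rw [this, norm_smul, mul_pow, Real.norm_eq_abs, sq_abs]
  have hρeq : ρ = (inner ℝ w x : ℝ) - μ * ‖w‖ ^ 2 := by
    rw [hρ, hd, inner_sub_right, real_inner_smul_right, real_inner_self_eq_norm_sq]
  have h1 : μ * K + ‖x - r‖ ^ 2 / 2 ≤ μ * ((inner ℝ w x : ℝ) - μ * ‖w‖ ^ 2) + μ ^ 2 * ‖w‖ ^ 2 / 2 := by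
    have := hrdR; rw [hxd] at this
    nlinarith [mul_le_mul_of_nonneg_left hDle hμ.le, hρeq]
  have hpr : persp f x0 (r, 0) = recFn f x0 r := by simp [persp]
  refine ⟨?_, hpr⟩
  intro y
  obtain ⟨y1, y2⟩ := y
  show persp f x0 (r, 0) + (((‖x - r‖ ^ 2 + (η - 0) ^ 2) / (2 * μ) : ℝ) : EReal) ≤
    persp f x0 (y1, y2) + (((‖x - y1‖ ^ 2 + (η - y2) ^ 2) / (2 * μ) : ℝ) : EReal)
  rw [hpr]
  rcases lt_trichotomy y2 0 with hy2 | hy2 | hy2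
  · have hpy : persp f x0 (y1, y2) = ⊤ := by
      simp [persp, not_lt.2 hy2.le, ne_of_lt hy2]
    rw [hpy, EReal.top_add_coe]; exact le_top
  · subst hy2
    have hpy : persp f x0 (y1, 0) = recFn f x0 y1 := by simp [persp]
    rw [hpy]
    rcases eq_or_ne (recFn f x0 y1) ⊤ with h | h
    · rw [h, EReal.top_add_coe]; exact le_top
    · have hKy : ((recFn f x0 y1).toReal : EReal) = recFn f x0 y1 :=
        EReal.coe_toReal h (recFn_ne_bot f hf hx0 y1)
      set Ky := (recFn f x0 y1).toReal
      have hry := hr y1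
      simp only at hry
      have hryR : μ * K + ‖x - r‖ ^ 2 / (2 * 1) ≤ μ * Ky + ‖x - y1‖ ^ 2 / (2 * 1) := by
        rw [← hKr, ← hKy, ← EReal.coe_mul, ← EReal.coe_mul, ← EReal.coe_add, ← EReal.coe_add,
          EReal.coe_le_coe_iff] at hry
        exact hry
      rw [← hKr, ← hKy, ← EReal.coe_add, ← EReal.coe_add, EReal.coe_le_coe_iff]
      exact divHelper' hμ (by nlinarith [hryR])
  · have hpy : persp f x0 (y1, y2) = (y2 : EReal) * f (y2⁻¹ • y1) := by
      simp [persp, hy2]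
    rw [hpy]
    rcases eq_or_ne (f (y2⁻¹ • y1)) ⊤ with h | h
    · rw [h, EReal.coe_mul_top_of_pos hy2, EReal.top_add_coe]; exact le_top
    · have hFz : ((f (y2⁻¹ • y1)).toReal : EReal) = f (y2⁻¹ • y1) :=
        EReal.coe_toReal h (hbot _)
      set F := (f (y2⁻¹ • y1)).toReal with hF
      have hFY : (inner ℝ (y2⁻¹ • y1) w : ℝ) - F ≤ s := by
        have h2 : ((inner ℝ (y2⁻¹ • y1) w : ℝ) : EReal) - f (y2⁻¹ • y1) ≤ conj f w := by
          rw [conj]; exact le_iSup (fun v : H => ((inner ℝ v w : ℝ) : EReal) - f v) (y2⁻¹ • y1)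
        rw [← hFz, ← hsw, ← EReal.coe_sub, EReal.coe_le_coe_iff] at h2
        exact h2
      have hQ : y2 * (inner ℝ (y2⁻¹ • y1) w : ℝ) = (inner ℝ y1 w : ℝ) := by
        rw [real_inner_smul_left]; field_simp
      have hB : (inner ℝ y1 w : ℝ) - y2 * s ≤ y2 * F := by
        nlinarith [mul_le_mul_of_nonneg_left hFY hy2.le, hQ]
      have hB2 : 2 * μ * ((inner ℝ y1 w : ℝ) - y2 * s) ≤ 2 * μ * (y2 * F) :=
        mul_le_mul_of_nonneg_left hB (by linarith)
      have hCc : y2 * η + y2 * (μ * s) ≤ 0 := by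
        nlinarith [mul_le_mul_of_nonneg_left hcondR hy2.le]
      have hexp : ‖x - y1 - μ • w‖ ^ 2
          = ‖x - y1‖ ^ 2 - 2 * (μ * ((inner ℝ x w : ℝ) - (inner ℝ y1 w : ℝ))) + μ ^ 2 * ‖w‖ ^ 2 := by
        rw [@norm_sub_sq_real H, real_inner_smul_right, norm_smul, mul_pow,
          Real.norm_eq_abs, sq_abs, inner_sub_left]
      have hD2 : (0:ℝ) ≤ ‖x - y1‖ ^ 2 - 2 * (μ * ((inner ℝ x w : ℝ) - (inner ℝ y1 w : ℝ)))
          + μ ^ 2 * ‖w‖ ^ 2 := by rw [← hexp]; positivity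
      have hcomm : (inner ℝ w x : ℝ) = (inner ℝ x w : ℝ) := real_inner_comm _ _
      rw [← hKr, ← hFz, ← EReal.coe_mul, ← EReal.coe_add, ← EReal.coe_add,
        EReal.coe_le_coe_iff]
      exact divHelper' hμ (finalIneq μ K (‖x - r‖ ^ 2) (‖w‖ ^ 2) (inner ℝ w x) η y2 F
        (‖x - y1‖ ^ 2) (inner ℝ y1 w) s (inner ℝ x w) hμ h1 hB2 hCc hD2 hcomm)
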